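/- Let ρ : ℝ² → ℝ be twice continuously differentiable and let L₁₂₁, L₁₂₂ : ℝ² → ℝ be continuously differentiable functions satisfying at every point the two equations (E1) −e^{2ρ}∂₁∂₂ρ + 4L₁₂₁∂₂ρ − 4L₁₂₂∂₁ρ − 2∂₂L₁₂₁ + 2∂₁L₁₂₂ = 0 and (E2) 2L₁₂₁∂₂ρ + 2L₁₂₂∂₁ρ − ∂₂L₁₂₁ − ∂₁L₁₂₂ = 0. Then the function (x¹,x²) ↦ e^{−2ρ(x¹,x²)} L₁₂₁(x¹,x²) + (1/4) ∂₁ρ(x¹,x²) has vanishing partial derivative with respect to x² at every point of ℝ²; equivalently, e^{−2ρ} L₁₂₁ + (1/4) ∂₁ρ depends only on x¹. -/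

import Mathlib

set_option maxHeartbeats 1000000


/-- Partial derivative of `f : ℝ² → ℝ` with respect to the `i`-th coordinate,
taken as the derivative along the corresponding coordinate line. -/
noncomputable def pd (i : Fin 2) (f : (Fin 2 → ℝ) → ℝ) : (Fin 2 → ℝ) → ℝ :=
  fun x => deriv (fun t => f (Function.update x i t)) (x i)

lemma myHasDerivAt_update (x : Fin 2 → ℝ) (i : Fin 2) (t : ℝ) :
    HasDerivAt (fun s : ℝ => Function.update x i s) (Pi.single i 1) t := by
  have h : (fun s : ℝ => Function.update x i s)
      = fun s => x + (s - x i) • (Pi.single i 1 : Fin 2 → ℝ) := by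
    funext s; funext j
    by_cases h : j = i
    · subst h; simp
    · simp [Function.update_apply, h, Pi.single_apply]
  rw [h]
  simpa using (((hasDerivAt_id t).sub_const (x i)).smul_const
    ((Pi.single i 1 : Fin 2 → ℝ))).const_add x

lemma pd_eq_fderiv (i : Fin 2) (f : (Fin 2 → ℝ) → ℝ) (x : Fin 2 → ℝ)
    (hf : DifferentiableAt ℝ f x) :
    pd i f x = fderiv ℝ f x (Pi.single i 1) := by
  have hup := myHasDerivAt_update x i (x i)
  have hfx : HasFDerivAt f (fderiv ℝ f x) (Function.update x i (x i)) := by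
    rw [Function.update_eq_self]; exact hf.hasFDerivAt
  have := hfx.comp_hasDerivAt (x i) hup
  simpa [pd, Function.comp_def] using this.deriv

/-- If `(L₁₂₁, L₁₂₂)` solves the 2-dimensional Riemann-Lanczos system (E1), (E2)
(with the differential gauge condition) for a C² conformal factor `ρ`, then
`e^{−2ρ} L₁₂₁ + (1/4) ∂₁ρ` has vanishing `x²`-partial derivative everywhere,
i.e. it depends only on `x¹`.  Coordinate `xⁱ` corresponds to `i - 1 : Fin 2`. -/
theorem riemann_lanczos_2d_L121_profile
    (ρ L121 L122 : (Fin 2 → ℝ) → ℝ)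
    (hρ : ContDiff ℝ 2 ρ) (hL121 : ContDiff ℝ 1 L121) (hL122 : ContDiff ℝ 1 L122)
    (hE1 : ∀ x : Fin 2 → ℝ,
      -Real.exp (2 * ρ x) * pd 0 (pd 1 ρ) x + 4 * L121 x * pd 1 ρ x
        - 4 * L122 x * pd 0 ρ x - 2 * pd 1 L121 x + 2 * pd 0 L122 x = 0)
    (hE2 : ∀ x : Fin 2 → ℝ,
      2 * L121 x * pd 1 ρ x + 2 * L122 x * pd 0 ρ x
        - pd 1 L121 x - pd 0 L122 x = 0) :
    ∀ x : Fin 2 → ℝ,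
      pd 1 (fun y => Real.exp (-(2 * ρ y)) * L121 y + (1/4) * pd 0 ρ y) x = 0 := by
  intro x
  set v0 : Fin 2 → ℝ := Pi.single 0 1 with hv0
  set v1 : Fin 2 → ℝ := Pi.single 1 1 with hv1
  have hρd : Differentiable ℝ ρ := hρ.differentiable (by norm_num)
  have hL121d : Differentiable ℝ L121 := hL121.differentiable one_ne_zero
  -- fderiv ρ is C¹
  have hfd : ContDiff ℝ 1 (fderiv ℝ ρ) := hρ.fderiv_right (by norm_num)
  have hfdd : Differentiable ℝ (fderiv ℝ ρ) := hfd.differentiable one_ne_zero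
  set B : (Fin 2 → ℝ) →L[ℝ] (Fin 2 → ℝ) →L[ℝ] ℝ := fderiv ℝ (fderiv ℝ ρ) x with hB
  -- symmetry of the second derivative
  have hsymm : B v1 v0 = B v0 v1 :=
    second_derivative_symmetric (fun y => (hρd y).hasFDerivAt)
      (hfdd x).hasFDerivAt v1 v0
  -- pd 0 ρ as a function
  have hpd0 : pd 0 ρ = fun y => fderiv ℝ ρ y v0 := by
    funext y; exact pd_eq_fderiv 0 ρ y (hρd y)
  have hpd1 : pd 1 ρ = fun y => fderiv ℝ ρ y v1 := by
    funext y; exact pd_eq_fderiv 1 ρ y (hρd y)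
  -- HasFDerivAt of the function pd 0 ρ
  have hG : HasFDerivAt (fun y => fderiv ℝ ρ y v0)
      (((ContinuousLinearMap.apply ℝ ℝ v0).comp B)) x :=
    (ContinuousLinearMap.apply ℝ ℝ v0).hasFDerivAt.comp x (hfdd x).hasFDerivAt
  -- mixed partial pd 0 (pd 1 ρ) at x equals B v0 v1
  have hmix : pd 0 (pd 1 ρ) x = B v0 v1 := by
    have hG1 : HasFDerivAt (fun y => fderiv ℝ ρ y v1)
        (((ContinuousLinearMap.apply ℝ ℝ v1).comp B)) x :=
      (ContinuousLinearMap.apply ℝ ℝ v1).hasFDerivAt.comp x (hfdd x).hasFDerivAt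
    rw [hpd1, pd_eq_fderiv 0 _ x hG1.differentiableAt, hG1.fderiv]
    simp [ContinuousLinearMap.comp_apply, hv0]
  -- HasFDerivAt of exp(-(2ρ))
  have hin : HasFDerivAt (fun y => -(2 * ρ y)) (-((2:ℝ) • fderiv ℝ ρ x)) x :=
    (((hρd x).hasFDerivAt).const_mul (2:ℝ)).neg
  have hexp : HasFDerivAt (fun y => Real.exp (-(2 * ρ y)))
      (Real.exp (-(2 * ρ x)) • (-((2:ℝ) • fderiv ℝ ρ x))) x :=
    by have h := (Real.hasDerivAt_exp (-(2 * ρ x))).comp_hasFDerivAt x hin; exact h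
  -- the full derivative of the target function
  have hF : HasFDerivAt (fun y => Real.exp (-(2 * ρ y)) * L121 y + (1/4) * pd 0 ρ y)
      ((Real.exp (-(2 * ρ x)) • fderiv ℝ L121 x
          + L121 x • (Real.exp (-(2 * ρ x)) • (-((2:ℝ) • fderiv ℝ ρ x))))
        + (1/4 : ℝ) • ((ContinuousLinearMap.apply ℝ ℝ v0).comp B)) x := by
    have h1 := hexp.fun_mul (hL121d x).hasFDerivAt
    have h2 := hG.const_mul (1/4 : ℝ)
    have := h1.fun_add h2
    simpa [hpd0, smul_smul] using this
  rw [pd_eq_fderiv 1 _ x hF.differentiableAt, hF.fderiv]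
  have hval : (((Real.exp (-(2 * ρ x)) • fderiv ℝ L121 x
          + L121 x • (Real.exp (-(2 * ρ x)) • (-((2:ℝ) • fderiv ℝ ρ x))))
        + (1/4 : ℝ) • ((ContinuousLinearMap.apply ℝ ℝ v0).comp B)) v1)
      = Real.exp (-(2 * ρ x)) * (fderiv ℝ L121 x v1)
        + L121 x * (Real.exp (-(2 * ρ x)) * (-(2 * (fderiv ℝ ρ x v1))))
        + (1/4) * (B v1 v0) := by
    simp only [ContinuousLinearMap.add_apply, ContinuousLinearMap.smul_apply,
      ContinuousLinearMap.comp_apply, ContinuousLinearMap.apply_apply,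
      ContinuousLinearMap.neg_apply, smul_eq_mul]
    try ring
  rw [hval, hsymm]
  -- identify pd's with fderiv's in the equations
  have e1 := hE1 x
  have e2 := hE2 x
  have hL1 : pd 1 L121 x = fderiv ℝ L121 x v1 := pd_eq_fderiv 1 L121 x (hL121d x)
  have hρ1 : pd 1 ρ x = fderiv ℝ ρ x v1 := pd_eq_fderiv 1 ρ x (hρd x)
  rw [hmix, hL1, hρ1] at e1
  rw [hL1, hρ1] at e2
  -- combine: e1 + 2*e2 eliminates L122 and pd 0 L122
  have key : fderiv ℝ L121 x v1
      = 2 * L121 x * fderiv ℝ ρ x v1 - (1/4) * Real.exp (2 * ρ x) * (B v0 v1) := by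
    linarith
  rw [key]
  have hne : Real.exp (2 * ρ x) ≠ 0 := Real.exp_ne_zero _
  have hexpmul : Real.exp (-(2 * ρ x)) * Real.exp (2 * ρ x) = 1 := by
    rw [← Real.exp_add]; simp
  linear_combination (-(1/4) * ((B v0) v1)) * hexpmul
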